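/- A hyperlinear group with the strong discrete approximation property has order at most 2. That is, if G is a group such that for every finite F ⊆ G and ε > 0 there exists n and a map φ : G → U(n) with φ(1) = 1, ℓ(φ(gh)φ(h)⁻¹φ(g)⁻¹) ≤ ε for g,h ∈ F, and ℓ(φ(g)) ≥ 1 − ε for all g ∈ F \ {1} (where ℓ(u) = (1/2)‖u − I‖_{HS}), then |G| ≤ 2. -/

import Mathlib

open Matrix

/-- The normalized Hilbert–Schmidt norm of an `n × n` complex matrix. -/
noncomputable def hsNorm (n : ℕ) (A : Matrix (Fin n) (Fin n) ℂ) : ℝ :=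
  Real.sqrt ((Aᴴ * A).trace.re / n)

/-- The length function `ℓ(g) = (1/2) ‖g - I‖_HS` on the unitary group. -/
noncomputable def hsLen (n : ℕ) (g : Matrix (Fin n) (Fin n) ℂ) : ℝ :=
  (1 / 2) * hsNorm n (g - 1)

attribute [local instance] Matrix.frobeniusNormedAddCommGroup

section aux

variable {n : ℕ}

lemma frob_sq (A : Matrix (Fin n) (Fin n) ℂ) :
    ‖A‖ ^ 2 = ∑ i, ∑ j, ‖A i j‖ ^ 2 := by
  rw [Matrix.frobenius_norm_def]
  rw [← Real.rpow_natCast ((∑ i, ∑ j, ‖A i j‖ ^ (2:ℝ)) ^ (1/2:ℝ)) 2,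
    ← Real.rpow_mul (by positivity)]
  norm_num

lemma trace_re_eq (A : Matrix (Fin n) (Fin n) ℂ) :
    ((Aᴴ * A).trace).re = ‖A‖ ^ 2 := by
  rw [frob_sq]
  rw [Matrix.trace, Complex.re_sum, Finset.sum_comm]
  congr 1
  ext j
  simp only [Matrix.diag_apply, Matrix.mul_apply, Complex.re_sum, Matrix.conjTranspose_apply]
  congr 1
  ext i
  simp [Complex.mul_re, Complex.sq_norm, Complex.normSq_apply]

lemma norm_mul_unitary (A u : Matrix (Fin n) (Fin n) ℂ) (hu : uᴴ * u = 1) :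
    ‖A * u‖ = ‖A‖ := by
  have hu' : u * uᴴ = 1 := mul_eq_one_comm.mp hu
  have h : ((A * u)ᴴ * (A * u)).trace = ((Aᴴ * A)).trace := by
    rw [Matrix.conjTranspose_mul]
    calc (uᴴ * Aᴴ * (A * u)).trace = (uᴴ * (Aᴴ * A) * u).trace := by
          congr 1; simp [mul_assoc]
    _ = (u * (uᴴ * (Aᴴ * A))).trace := by rw [Matrix.trace_mul_comm]
    _ = ((Aᴴ * A)).trace := by rw [← mul_assoc, hu', one_mul]
  have h2 : ‖A * u‖ ^ 2 = ‖A‖ ^ 2 := by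
    rw [← trace_re_eq, ← trace_re_eq, h]
  rw [← Real.sqrt_sq (norm_nonneg (A * u)), h2, Real.sqrt_sq (norm_nonneg A)]

lemma norm_one_eq : ‖(1 : Matrix (Fin n) (Fin n) ℂ)‖ = Real.sqrt n := by
  have h := trace_re_eq (1 : Matrix (Fin n) (Fin n) ℂ)
  simp only [Matrix.conjTranspose_one, mul_one, Matrix.trace_one] at h
  have : (‖(1 : Matrix (Fin n) (Fin n) ℂ)‖ : ℝ) ^ 2 = n := by
    rw [← h]; simp
  rw [← Real.sqrt_sq (norm_nonneg _), this]

lemma parallelogram (u : Matrix (Fin n) (Fin n) ℂ) (hu : uᴴ * u = 1) :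
    ‖u - 1‖ ^ 2 + ‖u + 1‖ ^ 2 = 4 * n := by
  have key : (u - 1)ᴴ * (u - 1) + (u + 1)ᴴ * (u + 1)
      = (4 : ℕ) • (1 : Matrix (Fin n) (Fin n) ℂ) := by
    have h1 : (u - 1)ᴴ * (u - 1) + (u + 1)ᴴ * (u + 1)
        = (uᴴ * u) + (uᴴ * u) + 2 • (1 : Matrix (Fin n) (Fin n) ℂ) := by
      simp only [Matrix.conjTranspose_sub, Matrix.conjTranspose_add, Matrix.conjTranspose_one,
        sub_mul, mul_sub, add_mul, mul_add, mul_one, one_mul]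
      abel
    rw [h1, hu]
    abel
  have htr : ((u - 1)ᴴ * (u - 1)).trace + ((u + 1)ᴴ * (u + 1)).trace = (4 : ℂ) * n := by
    rw [← Matrix.trace_add, key, Matrix.trace_smul, Matrix.trace_one]
    simp
  have h2 := congrArg Complex.re htr
  rw [Complex.add_re, trace_re_eq, trace_re_eq] at h2
  rw [h2]
  simp

end aux

attribute [local instance] Matrix.frobeniusNormedSpace

section aux2

variable {n : ℕ}

lemma hsNorm_eq (A : Matrix (Fin n) (Fin n) ℂ) :
    hsNorm n A = ‖A‖ / Real.sqrt n := by
  rw [hsNorm, trace_re_eq, Real.sqrt_div (sq_nonneg _), Real.sqrt_sq (norm_nonneg _)]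

lemma near_neg_one (hn : 0 < n) (x : Matrix (Fin n) (Fin n) ℂ) (hx : xᴴ * x = 1)
    (hl : 1 - 1/100 ≤ hsLen n x) : ‖x + 1‖ ≤ (3/10) * Real.sqrt n := by
  set c := Real.sqrt n with hc
  have hc0 : 0 < c := Real.sqrt_pos.mpr (by exact_mod_cast hn)
  have hcsq : c ^ 2 = n := Real.sq_sqrt (by positivity)
  have hpar := parallelogram x hx
  rw [hsLen, hsNorm_eq, ← hc] at hl
  have h1 : (198/100) * c ≤ ‖x - 1‖ := by
    have ha : 198/100 ≤ ‖x - 1‖ / c := by linarith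
    rwa [le_div_iff₀ hc0] at ha
  have h2 : ‖x + 1‖ ^ 2 ≤ (8/100) * c ^ 2 := by nlinarith
  nlinarith [norm_nonneg (x + 1)]

end aux2

theorem stmt_12 {G : Type*} [Group G]
    (happrox : ∀ F : Finset G, ∀ ε : ℝ, 0 < ε →
      ∃ n : ℕ, 0 < n ∧ ∃ φ : G → Matrix (Fin n) (Fin n) ℂ,
        (∀ g : G, (φ g)ᴴ * φ g = 1) ∧
        φ 1 = 1 ∧
        (∀ g ∈ F, ∀ h ∈ F, hsLen n (φ (g * h) * (φ h)⁻¹ * (φ g)⁻¹) ≤ ε) ∧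
        (∀ g ∈ F, g ≠ 1 → 1 - ε ≤ hsLen n (φ g))) :
    Nat.card G ≤ 2 := by
  classical
  by_contra hcard
  push_neg at hcard
  haveI : Finite G := Nat.finite_of_card_ne_zero (by omega)
  -- find g h with g ≠ 1, h ≠ 1, g * h ≠ 1
  obtain ⟨g, h, hg1, hh1, hgh1⟩ : ∃ g h : G, g ≠ 1 ∧ h ≠ 1 ∧ g * h ≠ 1 := by
    by_cases hsq : ∃ g : G, g ≠ 1 ∧ g * g ≠ 1
    · obtain ⟨g, hg, hgg⟩ := hsq; exact ⟨g, g, hg, hg, hgg⟩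
    · push_neg at hsq
      haveI : Nontrivial G := Finite.one_lt_card_iff_nontrivial.mp (by omega)
      obtain ⟨g, hg⟩ := exists_ne (1 : G)
      obtain ⟨h, hh⟩ : ∃ h : G, h ∉ ({1, g} : Set G) := by
        by_contra hall
        push_neg at hall
        have hsub : (Set.univ : Set G) ⊆ {1, g} := fun x _ => hall x
        have hle := Set.ncard_le_ncard hsub (Set.toFinite _)
        rw [Set.ncard_univ] at hle
        have h2 : ({1, g} : Set G).ncard ≤ 2 := by
          calc ({1, g} : Set G).ncard ≤ ({g} : Set G).ncard + 1 := Set.ncard_insert_le _ _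
          _ ≤ 2 := by simp [Set.ncard_singleton]
        omega
      simp only [Set.mem_insert_iff, Set.mem_singleton_iff, not_or] at hh
      refine ⟨g, h, hg, hh.1, fun he => ?_⟩
      have hgg := hsq g hg
      apply hh.2
      have h1 : h = g⁻¹ := eq_inv_of_mul_eq_one_right he
      exact h1.trans (eq_inv_of_mul_eq_one_left hgg).symm
  obtain ⟨n, hn, φ, hunit, hone, hhom, hlen⟩ := happrox {g, h, g * h} (1/100) (by norm_num)
  set c := Real.sqrt n with hcdef
  have hc0 : 0 < c := Real.sqrt_pos.mpr (by exact_mod_cast hn)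
  set u := φ g with hu_def
  set v := φ h with hv_def
  set w := φ (g * h) with hw_def
  have hu : uᴴ * u = 1 := hunit g
  have hv : vᴴ * v = 1 := hunit h
  have hw : wᴴ * w = 1 := hunit (g * h)
  have hvv : v * vᴴ = 1 := mul_eq_one_comm.mp hv
  have hgmem : g ∈ ({g, h, g * h} : Finset G) := by simp
  have hhmem : h ∈ ({g, h, g * h} : Finset G) := by simp
  have hghmem : g * h ∈ ({g, h, g * h} : Finset G) := by simp
  -- the three unitaries are close to -1
  have hbu : ‖u + 1‖ ≤ (3/10) * c := near_neg_one hn u hu (hlen g hgmem hg1)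
  have hbv : ‖v + 1‖ ≤ (3/10) * c := near_neg_one hn v hv (hlen h hhmem hh1)
  have hbw : ‖w + 1‖ ≤ (3/10) * c := near_neg_one hn w hw (hlen (g * h) hghmem hgh1)
  -- defect bound
  have hvinv : v⁻¹ = vᴴ := Matrix.inv_eq_left_inv hv
  have huinv : u⁻¹ = uᴴ := Matrix.inv_eq_left_inv hu
  have hdef : hsLen n (w * vᴴ * uᴴ) ≤ 1/100 := by
    have := hhom g hgmem h hhmem
    rwa [hvinv, huinv] at this
  rw [hsLen, hsNorm_eq, ← hcdef] at hdef
  have hdef' : ‖w * vᴴ * uᴴ - 1‖ ≤ (2/100) * c := by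
    have ha : ‖w * vᴴ * uᴴ - 1‖ / c ≤ 2/100 := by linarith
    rwa [div_le_iff₀ hc0] at ha
  -- ‖w - u*v‖ ≤ 2εc
  have huv_unit : (u * v)ᴴ * (u * v) = 1 := by
    rw [Matrix.conjTranspose_mul, mul_assoc, ← mul_assoc uᴴ u v, hu, one_mul, hv]
  have hkey : (w * vᴴ * uᴴ - 1) * (u * v) = w - u * v := by
    have h1 : w * vᴴ * uᴴ * (u * v) = w := by
      rw [mul_assoc (w * vᴴ) uᴴ (u * v), ← mul_assoc uᴴ u v, hu, one_mul, mul_assoc, hv, mul_one]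
    rw [sub_mul, one_mul, h1]
  have hwuv : ‖w - u * v‖ ≤ (2/100) * c := by
    calc ‖w - u * v‖ = ‖(w * vᴴ * uᴴ - 1) * (u * v)‖ := by rw [hkey]
    _ = ‖w * vᴴ * uᴴ - 1‖ := norm_mul_unitary _ _ huv_unit
    _ ≤ (2/100) * c := hdef'
  -- ‖u*v - 1‖ ≤ ‖u+1‖ + ‖v+1‖
  have huv1 : ‖u * v - 1‖ ≤ (6/10) * c := by
    have hid : u * v - 1 = (u + 1) * v - (v + 1) := by
      rw [add_mul, one_mul]; abel
    calc ‖u * v - 1‖ = ‖(u + 1) * v - (v + 1)‖ := by rw [hid]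
    _ ≤ ‖(u + 1) * v‖ + ‖v + 1‖ := norm_sub_le _ _
    _ = ‖u + 1‖ + ‖v + 1‖ := by rw [norm_mul_unitary _ _ hv]
    _ ≤ (6/10) * c := by linarith
  -- final contradiction
  have hone2 : ‖(1 : Matrix (Fin n) (Fin n) ℂ) + 1‖ = 2 * c := by
    have : (1 : Matrix (Fin n) (Fin n) ℂ) + 1 = (2 : ℝ) • 1 :=
      (two_smul ℝ (1 : Matrix (Fin n) (Fin n) ℂ)).symm
    rw [this, norm_smul, norm_one_eq]
    simp [hcdef]
  have hfinal : 2 * c ≤ (92/100) * c := by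
    have hid2 : (1 : Matrix (Fin n) (Fin n) ℂ) + 1 = (w + 1) - (w - u * v) - (u * v - 1) := by
      abel
    calc 2 * c = ‖(w + 1) - (w - u * v) - (u * v - 1)‖ := by rw [← hid2, hone2]
    _ ≤ ‖(w + 1) - (w - u * v)‖ + ‖u * v - 1‖ := norm_sub_le _ _
    _ ≤ ‖w + 1‖ + ‖w - u * v‖ + ‖u * v - 1‖ := by linarith [norm_sub_le (w + 1) (w - u * v)]
    _ ≤ (92/100) * c := by linarith
  linarith
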